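/- Let G be an n-isobicyclic group, let p_1 > p_2 > ... > p_l be the distinct primes dividing n in decreasing order, and for each i let P_i be a Sylow p_i-subgroup of G. Then for each i = 1, ..., l the set product N_i := P_1·P_2·⋯·P_i = { a_1 a_2 ⋯ a_i : a_j ∈ P_j } is a normal subgroup of G. -/

import Mathlib

open scoped Pointwise

namespace Isob

open Subgroup


variable {G : Type*} [Group G]

/-- Cardinality of a group that is a product of two subgroups with trivial intersection. -/
theorem card_eq_mul_of_mul_eq_univ {A B : Subgroup G}
    (hprod : ((A : Set G) * (B : Set G)) = Set.univ) (hinter : A ⊓ B = ⊥) :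
    Nat.card G = Nat.card A * Nat.card B := by
  have hbij : Function.Bijective (fun ab : A × B => (ab.1 : G) * (ab.2 : G)) := by
    constructor
    · rintro ⟨⟨a, ha⟩, ⟨b, hb⟩⟩ ⟨⟨a', ha'⟩, ⟨b', hb'⟩⟩ h
      simp only at h
      have hips : a'⁻¹ * a = b' * b⁻¹ := by
        rw [← eq_mul_inv_iff_mul_eq] at h
        rw [h]
        group
      have key : a'⁻¹ * a ∈ A ⊓ B := by
        constructor
        · exact A.mul_mem (A.inv_mem ha') ha
        · rw [hips]; exact B.mul_mem hb' (B.inv_mem hb)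
      rw [hinter, Subgroup.mem_bot, inv_mul_eq_one] at key
      have hb2 : b = b' := by
        rw [← key] at h
        exact mul_left_cancel h
      simp [key, hb2]
    · intro g
      have : g ∈ ((A : Set G) * (B : Set G)) := by rw [hprod]; trivial
      obtain ⟨a, ha, b, hb, rfl⟩ := this
      exact ⟨(⟨a, ha⟩, ⟨b, hb⟩), rfl⟩
  calc Nat.card G = Nat.card (A × B) := (Nat.card_congr (Equiv.ofBijective _ hbij)).symm
    _ = Nat.card A * Nat.card B := Nat.card_prod _ _

/-- zpowers of an integer power equals zpowers of the gcd power. -/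
theorem zpowers_zpow_eq [Finite G] (x : G) (m : ℤ) :
    zpowers (x ^ m) = zpowers (x ^ (Int.gcd (orderOf x) m)) := by
  set n : ℕ := orderOf x
  apply le_antisymm
  · rw [zpowers_le]
    have hdvd : ((Int.gcd n m : ℤ)) ∣ m := Int.gcd_dvd_right _ _
    obtain ⟨c, hc⟩ := hdvd
    have hx : x ^ m = (x ^ (Int.gcd n m : ℕ)) ^ c := by
      rw [← zpow_natCast x (Int.gcd n m), ← zpow_mul, ← hc]
    rw [hx]
    exact zpow_mem (mem_zpowers (x ^ (Int.gcd n m : ℕ))) c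
  · rw [zpowers_le]
    have hb : (Int.gcd n m : ℤ) = n * Int.gcdA n m + m * Int.gcdB n m := Int.gcd_eq_gcd_ab n m
    rw [← zpow_natCast x (Int.gcd n m), hb, zpow_add, zpow_mul, zpow_mul]
    have hxn : (x : G) ^ (n : ℤ) = 1 := by
      rw [zpow_natCast, pow_orderOf_eq_one]
    rw [hxn, one_zpow, one_mul]
    exact zpow_mem (mem_zpowers _) _

theorem orderOf_zpow' [Finite G] (x : G) (m : ℤ) :
    orderOf (x ^ m) = orderOf x / Int.gcd (orderOf x) m := by
  have h1 : orderOf (x ^ m) = Nat.card (zpowers (x ^ m)) := (Nat.card_zpowers _).symm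
  rw [zpowers_zpow_eq x m] at h1
  rw [h1, Nat.card_zpowers, orderOf_pow]
  congr 1
  have h3 : ((Int.gcd (orderOf x) m : ℤ)) ∣ ((orderOf x : ℕ) : ℤ) := Int.gcd_dvd_left _ _
  have hdvd : (Int.gcd (orderOf x) m) ∣ orderOf x := by exact_mod_cast h3
  exact Nat.gcd_eq_right hdvd

/-- In the cyclic group `zpowers x`, subgroups are determined by their order. -/
theorem zpowers_eq_of_orderOf_eq [Finite G] {x g : G} (hg : g ∈ zpowers x) {s : ℕ}
    (h : orderOf g = orderOf (x ^ s)) : zpowers g = zpowers (x ^ s) := by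
  obtain ⟨m, rfl⟩ := hg
  set n : ℕ := orderOf x with hn
  have hnpos : 0 < n := orderOf_pos x
  have h1 : orderOf (x ^ m) = n / Int.gcd n m := orderOf_zpow' x m
  have h2 : orderOf (x ^ s) = n / Nat.gcd n s := orderOf_pow x
  have hd1 : Int.gcd n m ∣ n := by
    have h3 : ((Int.gcd n m : ℤ)) ∣ (n : ℤ) := Int.gcd_dvd_left _ _
    exact_mod_cast h3
  have hd2 : Nat.gcd n s ∣ n := Nat.gcd_dvd_left n s
  have heq : Int.gcd n m = Nat.gcd n s := by
    have e : n / Int.gcd n m = n / Nat.gcd n s := by rw [← h1, ← h2, h]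
    have e1 : n / (n / Int.gcd n m) = Int.gcd n m := Nat.div_div_self hd1 hnpos.ne'
    have e2 : n / (n / Nat.gcd n s) = Nat.gcd n s := Nat.div_div_self hd2 hnpos.ne'
    rw [← e1, ← e2, e]
  have hs : zpowers (x ^ s) = zpowers (x ^ (s : ℤ)) := by rw [zpow_natCast]
  rw [zpowers_zpow_eq x m, heq, hs, zpowers_zpow_eq x (s : ℤ)]
  have : Int.gcd (n : ℤ) ((s : ℕ) : ℤ) = Nat.gcd n s := by
    simp [Int.gcd_natCast_natCast]
  rw [this]


variable {G : Type*} [Group G]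

/-- **Seed lemma**: a nontrivial isobicyclic group with trivial intersection has a
nontrivial normal cyclic subgroup, namely `⟨x^s⟩` for suitable `s`. -/
theorem seed [Finite G] (x y : G)
    (hprod : ((zpowers x : Set G) * (zpowers y : Set G)) = Set.univ)
    (hinter : zpowers x ⊓ zpowers y = ⊥)
    (hyx : orderOf y = orderOf x) (hn : 2 ≤ orderOf x) :
    ∃ w : G, w ≠ 1 ∧ (zpowers w).Normal := by
  classical
  set n : ℕ := orderOf x with hndef
  -- the conjugation property holds for k = n
  have hQn : 0 < n ∧ y⁻¹ * x ^ n * y ∈ zpowers x := by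
    constructor
    · omega
    · rw [pow_orderOf_eq_one]
      simpa using one_mem (zpowers x)
  have hex : ∃ k, 0 < k ∧ y⁻¹ * x ^ k * y ∈ zpowers x := ⟨n, hQn⟩
  set s : ℕ := Nat.find hex with hsdef
  obtain ⟨hs_pos, hs_mem⟩ : 0 < s ∧ y⁻¹ * x ^ s * y ∈ zpowers x := Nat.find_spec hex
  -- cardinality of the coset space
  have hcardG : Nat.card G = n * n := by
    rw [card_eq_mul_of_mul_eq_univ hprod hinter, Nat.card_zpowers, Nat.card_zpowers, hyx]
  have hcardQ : Nat.card (G ⧸ zpowers x) = n := by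
    have h1 : Nat.card G = Nat.card (G ⧸ zpowers x) * Nat.card (zpowers x) :=
      Subgroup.card_eq_card_quotient_mul_card_subgroup (zpowers x)
    rw [hcardG, Nat.card_zpowers] at h1
    have hnpos : 0 < n := by omega
    exact (Nat.eq_of_mul_eq_mul_right hnpos h1).symm
  -- s < n via pigeonhole
  have hslt : s < n := by
    by_contra hcon
    push_neg at hcon  -- n ≤ s
    -- injection Fin (s+1) → G ⧸ zpowers x
    have hinj : Function.Injective (fun r : Fin (s + 1) =>
        if (r : ℕ) < s then ((x ^ (r : ℕ) * y : G) : G ⧸ zpowers x)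
        else ((1 : G) : G ⧸ zpowers x)) := by
      intro r₁ r₂ h
      simp only at h
      -- helper: in-range ≠ out-of-range
      have hne1 : ∀ a : ℕ, a < s → ((x ^ a * y : G) : G ⧸ zpowers x) ≠ ((1 : G) : G ⧸ zpowers x) := by
        intro a _ hcontra
        rw [QuotientGroup.eq] at hcontra
        simp only [mul_one, inv_mul_eq_iff_eq_mul] at hcontra
        -- hcontra : (x ^ a * y)⁻¹ * 1 ∈ zpowers x  →  x^a * y ∈ zpowers x
        have hy : y ∈ zpowers x := by
          have h2 : (x ^ a * y)⁻¹ ∈ zpowers x := by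
            simpa using hcontra
          have h3 : x ^ a * y ∈ zpowers x := by
            simpa using inv_mem h2
          have h4 : (x ^ a)⁻¹ * (x ^ a * y) ∈ zpowers x :=
            mul_mem (inv_mem (pow_mem (mem_zpowers x) a)) h3
          simpa [mul_assoc] using h4
        have hy2 : y ∈ zpowers x ⊓ zpowers y := ⟨hy, mem_zpowers y⟩
        rw [hinter, Subgroup.mem_bot] at hy2
        have : orderOf y = 1 := by rw [hy2, orderOf_one]
        omega
      have key : ∀ a b : ℕ, a < s → b < s → a < b →
          ((x ^ a * y : G) : G ⧸ zpowers x) = ((x ^ b * y : G) : G ⧸ zpowers x) → False := by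
        intro a b ha hb hab heq
        rw [QuotientGroup.eq] at heq
        -- (x^a * y)⁻¹ * (x^b * y) = y⁻¹ * x^(b-a) * y ∈ zpowers x
        have hmem : y⁻¹ * x ^ (b - a) * y ∈ zpowers x := by
          have e : (x ^ a * y)⁻¹ * (x ^ b * y) = y⁻¹ * x ^ (b - a) * y := by
            have hba : b = a + (b - a) := by omega
            rw [mul_inv_rev]
            nth_rewrite 1 [hba]
            rw [pow_add]
            group
          rwa [e] at heq
        have hlt : b - a < s := by omega
        have := Nat.find_min hex hlt
        push_neg at this
        have hpos : 0 < b - a := by omega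
        exact absurd hmem (by simpa using this hpos)
      by_contra hne
      rcases lt_trichotomy (r₁ : ℕ) (r₂ : ℕ) with hlt | heqv | hgt
      · by_cases h1 : (r₁ : ℕ) < s
        · by_cases h2 : (r₂ : ℕ) < s
          · rw [if_pos h1, if_pos h2] at h
            exact key _ _ h1 h2 hlt h
          · rw [if_pos h1, if_neg h2] at h
            exact hne1 _ h1 h
        · -- r₁ out of range but r₁ < r₂ ≤ s: impossible since r₁ = s forces r₂ > s
          have : (r₁ : ℕ) = s := by omega
          have h2 : (r₂ : ℕ) < s + 1 := r₂.isLt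
          omega
      · exact hne (Fin.ext heqv)
      · by_cases h2 : (r₂ : ℕ) < s
        · by_cases h1 : (r₁ : ℕ) < s
          · rw [if_pos h1, if_pos h2] at h
            exact key _ _ h2 h1 hgt h.symm
          · rw [if_neg h1, if_pos h2] at h
            exact hne1 _ h2 h.symm
        · have : (r₂ : ℕ) = s := by omega
          have h1 : (r₁ : ℕ) < s + 1 := r₁.isLt
          omega
    have hle : s + 1 ≤ n := by
      have := Nat.card_le_card_of_injective _ hinj
      simpa [Nat.card_eq_fintype_card, Fintype.card_fin, hcardQ] using this
    omega
  -- the subgroup Z = zpowers (x^s) and its normalizer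
  set Z : Subgroup G := zpowers (x ^ s) with hZdef
  have hxmem : x ∈ normalizer (Z : Set G) := by
    rw [Subgroup.mem_normalizer_iff]
    intro h
    have key : ∀ g : G, Commute g x → ∀ z ∈ Z, g * z * g⁻¹ = z := by
      intro g hg z hz
      obtain ⟨k, hk⟩ := hz
      dsimp at hk
      subst hk
      have hc : Commute g ((x ^ s) ^ k) := (hg.pow_right s).zpow_right k
      rw [hc.eq, mul_inv_cancel_right]
    constructor
    · intro hh
      rw [key x (Commute.refl x) h hh]
      exact hh
    · intro hh
      have h2 := key x⁻¹ ((Commute.refl x).inv_left) _ hh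
      have h3 : x⁻¹ * (x * h * x⁻¹) * x⁻¹⁻¹ = h := by group
      rw [h3] at h2
      rw [h2]
      exact hh
  have hymem : y ∈ normalizer (Z : Set G) := by
    have hcord : orderOf ((MulAut.conj y⁻¹) (x ^ s)) = orderOf (x ^ s) :=
      orderOf_injective (MulAut.conj y⁻¹).toMonoidHom (MulAut.conj y⁻¹).injective _
    have hcmem : (MulAut.conj y⁻¹) (x ^ s) ∈ zpowers x := by
      have : (MulAut.conj y⁻¹) (x ^ s) = y⁻¹ * x ^ s * y := by
        simp [MulAut.conj_apply]
      rw [this]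
      exact hs_mem
    have hZc : zpowers ((MulAut.conj y⁻¹) (x ^ s)) = Z := zpowers_eq_of_orderOf_eq hcmem hcord
    have hyinv : y⁻¹ ∈ normalizer (Z : Set G) := by
      rw [Subgroup.mem_normalizer_iff]
      intro h
      constructor
      · intro hh
        obtain ⟨k, hk⟩ := hh
        dsimp at hk
        subst hk
        have e1 : y⁻¹ * (x ^ s) ^ k * y⁻¹⁻¹ = (MulAut.conj y⁻¹) ((x ^ s) ^ k) := by
          simp [MulAut.conj_apply]
        rw [e1, map_zpow, ← hZc]
        exact zpow_mem (mem_zpowers _) k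
      · intro hh
        rw [← hZc] at hh
        obtain ⟨k, hk⟩ := hh
        dsimp at hk
        have e0 : ((MulAut.conj y⁻¹) (x ^ s)) ^ k = y⁻¹ * h * y⁻¹⁻¹ := by
          simpa [MulAut.conj_apply] using hk
        have h2 : (MulAut.conj y⁻¹) ((x ^ s) ^ k) = (MulAut.conj y⁻¹) h := by
          rw [map_zpow, e0, MulAut.conj_apply]
        have h3 := (MulAut.conj y⁻¹).injective h2
        rw [← h3]
        exact zpow_mem (mem_zpowers _) k
    simpa using inv_mem hyinv
  have hnormal : Z.Normal := by
    rw [← Subgroup.normalizer_eq_top_iff]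
    rw [eq_top_iff]
    intro g _
    have hg : g ∈ ((zpowers x : Set G) * (zpowers y : Set G)) := by rw [hprod]; trivial
    obtain ⟨a, ha, b, hb, rfl⟩ := hg
    apply mul_mem
    · exact (zpowers_le.mpr hxmem) ha
    · exact (zpowers_le.mpr hymem) hb
  refine ⟨x ^ s, ?_, hnormal⟩
  intro h1
  have : n ∣ s := orderOf_dvd_of_pow_eq_one h1
  have := Nat.le_of_dvd hs_pos this
  omega


variable {G : Type*} [Group G]

/-- Cardinality of the preimage of a subgroup under a surjective hom. -/
theorem card_comap_surj {G' : Type*} [Group G'] [Finite G] (f : G →* G')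
    (hf : Function.Surjective f) (S : Subgroup G') :
    Nat.card (S.comap f) = Nat.card f.ker * Nat.card S := by
  have : Finite G' := Finite.of_surjective f hf
  set K : Subgroup G := S.comap f with hK
  have hker : f.ker ≤ K := by
    intro g hg
    simp only [MonoidHom.mem_ker] at hg
    simp [hK, Subgroup.mem_comap, hg, S.one_mem]
  -- the restricted hom
  set φ : K →* S := (f.comp K.subtype).codRestrict S (fun x => x.2) with hφ
  have hφsurj : Function.Surjective φ := by
    rintro ⟨s, hs⟩
    obtain ⟨g, rfl⟩ := hf s
    exact ⟨⟨g, hs⟩, rfl⟩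
  have hφker : Nat.card φ.ker = Nat.card f.ker := by
    have hkerEq : φ.ker = (f.ker).subgroupOf K := by
      ext ⟨g, hg⟩
      simp [hφ, MonoidHom.mem_ker, Subgroup.mem_subgroupOf, MonoidHom.codRestrict,
        MonoidHom.restrict, Subtype.ext_iff]
    rw [hkerEq]
    exact Nat.card_congr (Subgroup.subgroupOfEquivOfLe hker).toEquiv
  have h1 : Nat.card K = Nat.card (K ⧸ φ.ker) * Nat.card φ.ker :=
    Subgroup.card_eq_card_quotient_mul_card_subgroup φ.ker
  have h2 : Nat.card (K ⧸ φ.ker) = Nat.card S :=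
    Nat.card_congr (QuotientGroup.quotientKerEquivOfSurjective φ hφsurj).toEquiv
  rw [h1, h2, hφker, Nat.mul_comm]

/-- Cardinality of the join of two subgroups with trivial intersection, one normal. -/
theorem card_sup_disjoint (M P : Subgroup G) [hM : M.Normal] (h : M ⊓ P = ⊥) :
    Nat.card (M ⊔ P : Subgroup G) = Nat.card M * Nat.card P := by
  have hbij : Function.Bijective
      (fun mu : M × P => (⟨(mu.1 : G) * (mu.2 : G), mul_mem_sup mu.1.2 mu.2.2⟩ :
        (M ⊔ P : Subgroup G))) := by
    constructor
    · rintro ⟨⟨m, hm⟩, ⟨u, hu⟩⟩ ⟨⟨m', hm'⟩, ⟨u', hu'⟩⟩ hh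
      rw [Subtype.ext_iff] at hh
      simp only at hh
      have hips : m'⁻¹ * m = u' * u⁻¹ := by
        rw [← eq_mul_inv_iff_mul_eq] at hh
        rw [hh]
        group
      have key : m'⁻¹ * m ∈ M ⊓ P := by
        constructor
        · exact M.mul_mem (M.inv_mem hm') hm
        · rw [hips]; exact P.mul_mem hu' (P.inv_mem hu)
      rw [h, Subgroup.mem_bot, inv_mul_eq_one] at key
      have hu2 : u = u' := by
        rw [← key] at hh
        exact mul_left_cancel hh
      simp [key, hu2]
    · rintro ⟨z, hz⟩
      have hz' : z ∈ (↑M * ↑P : Set G) := by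
        rw [← Subgroup.normal_mul]
        exact hz
      obtain ⟨m, hm, u, hu, rfl⟩ := hz'
      exact ⟨(⟨m, hm⟩, ⟨u, hu⟩), rfl⟩
  calc Nat.card (M ⊔ P : Subgroup G) = Nat.card (M × P) :=
        (Nat.card_congr (Equiv.ofBijective _ hbij)).symm
    _ = Nat.card M * Nat.card P := Nat.card_prod _ _

/-- Subgroups: le plus card ge implies eq. -/
theorem subgroup_eq_of_le_of_card_le [Finite G] {J H : Subgroup G} (hle : J ≤ H)
    (hcard : Nat.card H ≤ Nat.card J) : J = H := by
  have h1 : Nat.card (J.subgroupOf H) = Nat.card J :=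
    Nat.card_congr (Subgroup.subgroupOfEquivOfLe hle).toEquiv
  have hJle : Nat.card J ≤ Nat.card H :=
    Nat.card_le_card_of_injective _ (Subgroup.inclusion_injective hle)
  have h2 : J.subgroupOf H = ⊤ := by
    apply Subgroup.eq_top_of_card_eq
    rw [h1]
    exact le_antisymm hJle hcard
  have h3 : H ≤ J := (Subgroup.subgroupOf_eq_top).mp h2
  exact le_antisymm hle h3




universe u

theorem sylow_normal_aux : ∀ (c : ℕ) (G : Type u) [Group G] [Finite G], ∀ (x y : G) (α : G ≃* G),
    Nat.card G ≤ c →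
    ((zpowers x : Set G) * (zpowers y : Set G)) = Set.univ →
    α x = y → α y = x →
    ∀ (p : ℕ), p.Prime → (∀ q : ℕ, q.Prime → q ∣ Nat.card G → q ≤ p) →
    ∀ P : Sylow p G, (P : Subgroup G).Normal := by
  intro c
  induction c with
  | zero =>
    intro G _ _ x y α hc _ _ _ p hp _ P
    have := Nat.card_pos (α := G)
    omega
  | succ c IH =>
    intro G _ _ x y α hc hprod hαx hαy p hp hmax P
    haveI : Fact p.Prime := ⟨hp⟩
    have hyx : orderOf y = orderOf x := by
      rw [← hαx]
      exact orderOf_injective α.toMonoidHom α.injective x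
    by_cases hn1 : orderOf x ≤ 1
    · -- trivial group
      have hx1 : x = 1 := by
        have h0 : 0 < orderOf x := orderOf_pos x
        exact orderOf_eq_one_iff.mp (by omega)
      have hy1 : y = 1 := by rw [← hαx, hx1, map_one]
      have hone : ∀ g : G, g = 1 := by
        intro g
        have hg : g ∈ ((zpowers x : Set G) * (zpowers y : Set G)) := by rw [hprod]; trivial
        obtain ⟨a, ha, b, hb, rfl⟩ := hg
        obtain ⟨i, hi⟩ := ha
        obtain ⟨j, hj⟩ := hb
        dsimp at hi hj
        rw [← hi, ← hj, hx1, hy1]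
        simp
      constructor
      intro m hm g
      have := hone m
      subst this
      have hg1 := hone g
      subst hg1
      simpa using (P : Subgroup G).one_mem
    · push_neg at hn1
      have hn2 : 2 ≤ orderOf x := hn1
      -- SEED: a nontrivial normal cyclic subgroup
      obtain ⟨w, hw1, hwN⟩ : ∃ w : G, w ≠ 1 ∧ (zpowers w).Normal := by
        by_cases hC : zpowers x ⊓ zpowers y = ⊥
        · exact seed x y hprod hC hyx hn2
        · obtain ⟨g, hgmem, hg1⟩ := (zpowers x ⊓ zpowers y).bot_or_exists_ne_one.resolve_left hC
          refine ⟨g, hg1, ?_⟩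
          have hcentral : ∀ h : G, Commute h g := by
            intro h
            have hh : h ∈ ((zpowers x : Set G) * (zpowers y : Set G)) := by rw [hprod]; trivial
            obtain ⟨a, ha, b, hb, rfl⟩ := hh
            have hga : Commute a g := by
              obtain ⟨i, hi⟩ := ha
              obtain ⟨j, hj⟩ := hgmem.1
              rw [← hi, ← hj]
              exact (Commute.refl x).zpow_zpow i j
            have hgb : Commute b g := by
              obtain ⟨i, hi⟩ := hb
              obtain ⟨j, hj⟩ := hgmem.2
              rw [← hi, ← hj]
              exact (Commute.refl y).zpow_zpow i j
            exact hga.mul_left hgb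
          constructor
          intro m hm h
          obtain ⟨k, hk⟩ := hm
          dsimp at hk
          subst hk
          have hc : Commute h (g ^ k) := (hcentral h).zpow_right k
          rw [hc.eq, mul_inv_cancel_right]
          exact zpow_mem (mem_zpowers g) k
      -- prime q dividing the order of w, element w' of order q
      have hwo : orderOf w ≠ 1 := fun h => hw1 (orderOf_eq_one_iff.mp h)
      obtain ⟨q, hq, hqd⟩ := Nat.exists_prime_and_dvd hwo
      haveI : Fact q.Prime := ⟨hq⟩
      have hwopos : orderOf w ≠ 0 := (orderOf_pos w).ne'
      set w' : G := w ^ (orderOf w / q) with hw'def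
      have hw'ord : orderOf w' = q := by
        rw [hw'def, orderOf_pow]
        rw [Nat.gcd_eq_right (Nat.div_dvd_of_dvd hqd)]
        exact Nat.div_div_self hqd hwopos
      have hw'1 : w' ≠ 1 := by
        intro e
        rw [e, orderOf_one] at hw'ord
        exact hq.one_lt.ne hw'ord
      have hN : (zpowers w').Normal := by
        constructor
        intro m hm g
        obtain ⟨k, hk⟩ := hm
        dsimp at hk
        subst hk
        obtain ⟨mm, hmm⟩ := hwN.conj_mem w (mem_zpowers w) g
        dsimp at hmm
        have e1 : g * w' * g⁻¹ = w' ^ mm := by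
          rw [hw'def, ← conj_pow, ← hmm]
          rw [← zpow_natCast (w ^ mm) (orderOf w / q), ← zpow_mul, mul_comm,
            zpow_mul, zpow_natCast]
        have e2 : g * w' ^ k * g⁻¹ = (g * w' * g⁻¹) ^ k := conj_zpow.symm
        rw [e2, e1, ← zpow_mul]
        exact zpow_mem (mem_zpowers w') _
      -- N, N' = α(N), M = N ⊔ N'
      set N : Subgroup G := zpowers w' with hNdef
      set N' : Subgroup G := N.map α.toMonoidHom with hN'def
      have hN'zp : N' = zpowers (α w') := MonoidHom.map_zpowers α.toMonoidHom w'
      have hN'norm : N'.Normal := hN.map α.toMonoidHom α.surjective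
      have hN'ord : orderOf (α w') = q := by
        have h := orderOf_injective α.toMonoidHom α.injective w'
        rw [hw'ord] at h
        exact h
      set M : Subgroup G := N ⊔ N' with hMdef
      have hNM : N ≤ M := le_sup_left
      have hN'M : N' ≤ M := le_sup_right
      have hMnorm : M.Normal := by
        constructor
        intro m hm g
        have hm' : m ∈ ((N : Set G) * (N' : Set G)) := by
          rw [← Subgroup.normal_mul]; exact hm
        obtain ⟨u, hu, v, hv, rfl⟩ := hm'
        have e : g * (u * v) * g⁻¹ = (g * u * g⁻¹) * (g * v * g⁻¹) := by group
        rw [e]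
        exact mul_mem (hNM (hN.conj_mem u hu g)) (hN'M (hN'norm.conj_mem v hv g))
      -- every element of M has order dividing q (in particular M is a q-group)
      have hMexp : ∀ m ∈ M, m ^ q = 1 := by
        intro m hm
        have hm' : m ∈ ((N : Set G) * (N' : Set G)) := by
          rw [← Subgroup.normal_mul]; exact hm
        obtain ⟨u, hu, v, hv, rfl⟩ := hm'
        have hq1 : w' ^ q = 1 := by rw [← hw'ord]; exact pow_orderOf_eq_one w'
        have hq2 : (α w') ^ q = 1 := by rw [← hN'ord]; exact pow_orderOf_eq_one (α w')
        have huq : u ^ q = 1 := by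
          obtain ⟨i, hi⟩ := hu
          dsimp at hi
          rw [← hi, ← zpow_natCast (w' ^ i) q, ← zpow_mul, mul_comm, zpow_mul, zpow_natCast,
            hq1, one_zpow]
        have hvq : v ^ q = 1 := by
          have hv2 : v ∈ zpowers (α w') := hN'zp ▸ hv
          obtain ⟨i, hi⟩ := hv2
          dsimp at hi
          rw [← hi, ← zpow_natCast ((α w') ^ i) q, ← zpow_mul, mul_comm, zpow_mul, zpow_natCast,
            hq2, one_zpow]
        have hcomm : Commute u v := by
          by_cases hNN : N' = N
          · rw [hNN] at hv
            obtain ⟨i, hi⟩ := hu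
            obtain ⟨j, hj⟩ := hv
            rw [← hi, ← hj]
            exact (Commute.refl w').zpow_zpow i j
          · have hdisj : N ⊓ N' = ⊥ := by
              have hcard : Nat.card (N ⊓ N' : Subgroup G) ∣ q := by
                have h1 : Nat.card (N ⊓ N' : Subgroup G) ∣ Nat.card N :=
                  Subgroup.card_dvd_of_le inf_le_left
                rwa [Nat.card_zpowers, hw'ord] at h1
              rcases (Nat.dvd_prime hq).mp hcard with h1 | h1
              · exact Subgroup.card_eq_one.mp h1
              · exfalso
                have hcardN : Nat.card N = q := by rw [hNdef, Nat.card_zpowers, hw'ord]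
                have hcardN' : Nat.card N' = q := by rw [hN'zp, Nat.card_zpowers, hN'ord]
                have hNsub : N ≤ N' := by
                  have hNle : N ⊓ N' ≤ N := inf_le_left
                  have he : N ⊓ N' = N := subgroup_eq_of_le_of_card_le hNle
                    (le_of_eq (by rw [h1, hcardN]))
                  rw [← he]
                  exact inf_le_right
                have he2 : N = N' := subgroup_eq_of_le_of_card_le hNsub
                  (le_of_eq (by rw [hcardN', hcardN]))
                exact hNN he2.symm
            exact Subgroup.commute_of_normal_of_disjoint N N' hN hN'norm
              (disjoint_iff.mpr hdisj) u v hu hv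
        rw [hcomm.mul_pow, huq, hvq, one_mul]
      have hMq : IsPGroup q M := by
        intro g
        refine ⟨1, ?_⟩
        rw [pow_one]
        have := hMexp (g : G) g.2
        exact Subtype.ext (by rw [SubmonoidClass.coe_pow]; simpa using this)
      have hMbot : M ≠ ⊥ := by
        intro h
        have hmem : w' ∈ M := hNM (mem_zpowers w')
        rw [h, Subgroup.mem_bot] at hmem
        exact hw'1 hmem
      -- α² = id and α stabilizes M
      have hα2 : ∀ g : G, α (α g) = g := by
        have hcl : Subgroup.closure ({x, y} : Set G) = ⊤ := by
          rw [eq_top_iff]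
          intro g _
          have hg : g ∈ ((zpowers x : Set G) * (zpowers y : Set G)) := by rw [hprod]; trivial
          obtain ⟨a, ha, b, hb, rfl⟩ := hg
          apply mul_mem
          · obtain ⟨i, hi⟩ := ha
            rw [← hi]
            exact zpow_mem (Subgroup.subset_closure (by simp)) i
          · obtain ⟨j, hj⟩ := hb
            rw [← hj]
            exact zpow_mem (Subgroup.subset_closure (by simp)) j
        intro g
        have hmem : g ∈ Subgroup.closure ({x, y} : Set G) := hcl ▸ Subgroup.mem_top g
        induction hmem using Subgroup.closure_induction with
        | mem z hz =>
          rcases hz with rfl | hz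
          · rw [hαx, hαy]
          · rw [Set.mem_singleton_iff] at hz
            subst hz
            rw [hαy, hαx]
        | one => rw [map_one, map_one]
        | mul a b _ _ iha ihb => rw [map_mul, map_mul, iha, ihb]
        | inv a _ iha => rw [map_inv, map_inv, iha]
      have hαM : M.map α.toMonoidHom = M := by
        have hcomp : α.toMonoidHom.comp α.toMonoidHom = MonoidHom.id G := by
          ext g
          exact hα2 g
        have e2 : N'.map α.toMonoidHom = N := by
          rw [hN'def, Subgroup.map_map, hcomp, Subgroup.map_id]
        rw [hMdef, Subgroup.map_sup, ← hN'def, e2, sup_comm]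
      -- quotient
      have hcardGM : Nat.card G = Nat.card (G ⧸ M) * Nat.card M :=
        Subgroup.card_eq_card_quotient_mul_card_subgroup M
      have hM2 : 2 ≤ Nat.card M := by
        have h1 : Nat.card M ≠ 1 := fun h => hMbot (Subgroup.card_eq_one.mp h)
        have h2 : 0 < Nat.card M := Nat.card_pos
        omega
      have hcardlt : Nat.card (G ⧸ M) < Nat.card G := by
        have h2 : 0 < Nat.card (G ⧸ M) := Nat.card_pos
        calc Nat.card (G ⧸ M) < Nat.card (G ⧸ M) * Nat.card M := by
              exact (Nat.lt_mul_iff_one_lt_right h2).mpr (by omega)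
          _ = Nat.card G := hcardGM.symm
      set π : G →* G ⧸ M := QuotientGroup.mk' M with hπdef
      have hπsurj : Function.Surjective π := QuotientGroup.mk'_surjective M
      set αbar : (G ⧸ M) ≃* (G ⧸ M) := QuotientGroup.congr M M α hαM with hαbardef
      have hαbar_mk : ∀ g : G, αbar (π g) = π (α g) := fun g => rfl
      have hprodbar :
          ((zpowers (π x) : Set (G ⧸ M)) * (zpowers (π y) : Set (G ⧸ M))) = Set.univ := by
        rw [Set.eq_univ_iff_forall]
        intro gb
        obtain ⟨g, rfl⟩ := hπsurj gb
        have hg : g ∈ ((zpowers x : Set G) * (zpowers y : Set G)) := by rw [hprod]; trivial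
        obtain ⟨a, ha, b, hb, rfl⟩ := hg
        rw [map_mul]
        refine Set.mul_mem_mul ?_ ?_
        · obtain ⟨i, hi⟩ := ha
          dsimp at hi
          refine ⟨i, ?_⟩
          dsimp
          rw [← hi, map_zpow]
        · obtain ⟨j, hj⟩ := hb
          dsimp at hj
          refine ⟨j, ?_⟩
          dsimp
          rw [← hj, map_zpow]
      have hIH := IH (G ⧸ M) (π x) (π y) αbar (by omega) hprodbar
        (by rw [hαbar_mk, hαx]) (by rw [hαbar_mk, hαy]) p hp
        (fun q' hq' hd => hmax q' hq' (hd.trans ⟨Nat.card M, hcardGM⟩))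
      -- Sylow image and preimage
      set Pbar : Sylow p (G ⧸ M) := P.mapSurjective hπsurj with hPbardef
      have hPbarcoe : (Pbar : Subgroup (G ⧸ M)) = (P : Subgroup G).map π := rfl
      haveI hPbarN : (Pbar : Subgroup (G ⧸ M)).Normal := hIH Pbar
      set H : Subgroup G := (Pbar : Subgroup (G ⧸ M)).comap π with hHdef
      haveI hHnorm : H.Normal := hPbarN.comap π
      have hMH : M ≤ H := by
        intro g hg
        have : π g = 1 := by
          rw [hπdef]
          simpa [QuotientGroup.eq_one_iff] using hg
        rw [hHdef, Subgroup.mem_comap, this]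
        exact Subgroup.one_mem _
      have hSylEq : ∀ R : Sylow p (G ⧸ M), R = Pbar := by
        intro R
        haveI : (Pbar : Subgroup (G ⧸ M)).Normal := hPbarN
        obtain ⟨g, hg⟩ := MulAction.exists_smul_eq (G ⧸ M) R Pbar
        rw [← hg]
        haveI : (R : Subgroup (G ⧸ M)).Normal := hIH R
        rw [Sylow.smul_eq_of_normal]
      have hallP : ∀ P' : Sylow p G, (P' : Subgroup G) ≤ H := by
        intro P'
        have h1 : IsPGroup p ((P' : Subgroup G).map π) := P'.2.map π
        obtain ⟨R, hR⟩ := h1.exists_le_sylow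
        have h2 : (P' : Subgroup G).map π ≤ (Pbar : Subgroup (G ⧸ M)) := by
          rw [← hSylEq R]; exact hR
        calc (P' : Subgroup G) ≤ ((P' : Subgroup G).map π).comap π :=
              Subgroup.le_comap_map _ _
          _ ≤ H := Subgroup.comap_mono h2
      by_cases hqp : q = p
      · -- q = p: H is a p-group equal to every Sylow subgroup
        have hHp : IsPGroup p H := by
          rintro ⟨h, hh⟩
          have h1 : π h ∈ (Pbar : Subgroup (G ⧸ M)) := hh
          obtain ⟨k1, hk1⟩ := Pbar.2 ⟨π h, h1⟩
          have hk1' : π (h ^ p ^ k1) = 1 := by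
            have hc := congrArg Subtype.val hk1
            rw [map_pow]
            simpa using hc
          have h2 : h ^ p ^ k1 ∈ M := by
            rw [hπdef] at hk1'
            rwa [QuotientGroup.mk'_apply, QuotientGroup.eq_one_iff] at hk1'
          have h3 : (h ^ p ^ k1) ^ q = 1 := hMexp _ h2
          refine ⟨k1 + 1, ?_⟩
          rw [Subtype.ext_iff]
          rw [SubmonoidClass.coe_pow]
          rw [pow_add, pow_mul, pow_one]
          rw [hqp] at h3
          simpa using h3
        obtain ⟨R, hHR⟩ := hHp.exists_le_sylow
        have hRH : (R : Subgroup G) ≤ H := hallP R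
        have hHeqR : H = (R : Subgroup G) := le_antisymm hHR hRH
        have hPR : (P : Subgroup G) ≤ (R : Subgroup G) := hHeqR ▸ hallP P
        have hfin : (R : Subgroup G) = (P : Subgroup G) := P.3 R.2 hPR
        rw [← hfin, ← hHeqR]
        exact hHnorm
      · -- q ≠ p
        have hqdvd : q ∣ Nat.card G := hqd.trans (orderOf_dvd_natCard w)
        have hqlt : q < p := lt_of_le_of_ne (hmax q hq hqdvd) hqp
        -- P centralizes the generators of N and N'
        have hkey : ∀ v : G, orderOf v = q → (zpowers v).Normal →
            ∀ u ∈ (P : Subgroup G), u * v * u⁻¹ = v := by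
          intro v hvord hvN u hu
          obtain ⟨k0, hk0⟩ := P.2 ⟨u, hu⟩
          have hu_pow : u ^ p ^ k0 = 1 := by
            have hc := congrArg Subtype.val hk0
            simpa using hc
          obtain ⟨m, hm⟩ := hvN.conj_mem v (mem_zpowers v) u
          dsimp at hm
          have hiter : ∀ r : ℕ, u ^ r * v * (u ^ r)⁻¹ = v ^ (m ^ r) := by
            intro r
            induction r with
            | zero => simp
            | succ r ih =>
              have e1 : u ^ (r + 1) * v * (u ^ (r + 1))⁻¹
                  = u * (u ^ r * v * (u ^ r)⁻¹) * u⁻¹ := by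
                rw [pow_succ']
                group
              rw [e1, ih]
              have e2 : u * v ^ m ^ r * u⁻¹ = (u * v * u⁻¹) ^ m ^ r := conj_zpow.symm
              rw [e2, ← hm, ← zpow_mul, ← pow_succ']
          have hfin : v ^ (m ^ p ^ k0) = v := by
            rw [← hiter (p ^ k0), hu_pow]
            group
          have hdvd1 : ((q : ℤ)) ∣ m ^ p ^ k0 - 1 := by
            have hz : v ^ (m ^ p ^ k0 - 1) = 1 := by
              rw [zpow_sub, hfin, zpow_one, mul_inv_cancel]
            have h2 := orderOf_dvd_iff_zpow_eq_one.mpr hz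
            rwa [hvord] at h2
          have hμpow : ((m : ZMod q)) ^ p ^ k0 = 1 := by
            have h3 := (ZMod.intCast_zmod_eq_zero_iff_dvd _ q).mpr hdvd1
            push_cast at h3
            linear_combination h3
          have hμne : ((m : ZMod q)) ≠ 0 := by
            intro h0
            have h4 : ((q : ℤ)) ∣ m := by exact_mod_cast (ZMod.intCast_zmod_eq_zero_iff_dvd m q).mp h0
            obtain ⟨d, hd⟩ := h4
            have hvm1 : v ^ m = 1 := by
              rw [hd, zpow_mul]
              have : v ^ ((q : ℤ)) = 1 := by
                rw [zpow_natCast, ← hvord, pow_orderOf_eq_one]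
              rw [this, one_zpow]
            rw [hm] at hvm1
            have : v = 1 := by
              have := congrArg (fun z => u⁻¹ * z * u) hvm1
              simpa [mul_assoc] using this
            rw [this, orderOf_one] at hvord
            exact hq.one_lt.ne hvord
          have hunit : IsUnit ((m : ZMod q)) := isUnit_iff_ne_zero.mpr hμne
          have h1 : orderOf hunit.unit ∣ p ^ k0 := by
            apply orderOf_dvd_of_pow_eq_one
            apply Units.ext
            push_cast [hunit.unit_spec]
            exact hμpow
          have h2 : orderOf hunit.unit ∣ q - 1 := by
            have h2a : orderOf hunit.unit ∣ Nat.card (ZMod q)ˣ := orderOf_dvd_natCard _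
            rwa [Nat.card_eq_fintype_card, ZMod.card_units] at h2a
          have hcop : Nat.Coprime (p ^ k0) (q - 1) := by
            apply Nat.Coprime.pow_left
            rw [hp.coprime_iff_not_dvd]
            intro hdd
            have hq2 : 2 ≤ q := hq.two_le
            have : p ≤ q - 1 := Nat.le_of_dvd (by omega) hdd
            omega
          have hone : orderOf hunit.unit = 1 :=
            Nat.dvd_one.mp (hcop ▸ Nat.dvd_gcd h1 h2)
          have hμ1 : ((m : ZMod q)) = 1 := by
            have h5 := orderOf_eq_one_iff.mp hone
            have h6 : (hunit.unit : ZMod q) = 1 := by rw [h5]; rfl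
            rwa [hunit.unit_spec] at h6
          have hdvd2 : ((q : ℤ)) ∣ m - 1 := by
            have h7 : ((m - 1 : ℤ) : ZMod q) = 0 := by
              push_cast
              rw [hμ1]
              ring
            exact_mod_cast (ZMod.intCast_zmod_eq_zero_iff_dvd (m - 1) q).mp h7
          obtain ⟨d, hd⟩ := hdvd2
          have hvm : v ^ m = v := by
            have hmeq : m = 1 + (q : ℤ) * d := by linarith
            rw [hmeq, zpow_add, zpow_one, zpow_mul]
            have : v ^ ((q : ℤ)) = 1 := by
              rw [zpow_natCast, ← hvord, pow_orderOf_eq_one]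
            rw [this, one_zpow, mul_one]
          rw [← hm, hvm]
        -- P commutes with M elementwise
        have hPM : ∀ u ∈ (P : Subgroup G), ∀ m' ∈ M, Commute u m' := by
          intro u hu m' hm'
          have hm2 : m' ∈ ((N : Set G) * (N' : Set G)) := by
            rw [← Subgroup.normal_mul]; exact hm'
          obtain ⟨v1, hv1, v2, hv2, rfl⟩ := hm2
          have c1 : Commute u v1 := by
            obtain ⟨k, hk⟩ := hv1
            dsimp at hk
            subst hk
            have hcw := hkey w' hw'ord hN u hu
            have hc : Commute u w' := by
              rwa [mul_inv_eq_iff_eq_mul] at hcw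
            exact hc.zpow_right k
          have c2 : Commute u v2 := by
            have hv2' : v2 ∈ zpowers (α w') := hN'zp ▸ hv2
            obtain ⟨k, hk⟩ := hv2'
            dsimp at hk
            subst hk
            have hNαnorm : (zpowers (α w')).Normal := hN'zp ▸ hN'norm
            have hcw := hkey (α w') hN'ord hNαnorm u hu
            have hc : Commute u (α w') := by
              rwa [mul_inv_eq_iff_eq_mul] at hcw
            exact hc.zpow_right k
          exact c1.mul_right c2
        -- disjointness
        have hdisjMP : M ⊓ (P : Subgroup G) = ⊥ := by
          rw [eq_bot_iff]
          intro g hg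
          obtain ⟨k2, hk2⟩ := P.2 ⟨g, hg.2⟩
          have hg_pow : g ^ p ^ k2 = 1 := by
            have hc := congrArg Subtype.val hk2
            simpa using hc
          have hgq : g ^ q = 1 := hMexp g hg.1
          have h1 : orderOf g ∣ q := orderOf_dvd_of_pow_eq_one hgq
          have h2 : orderOf g ∣ p ^ k2 := orderOf_dvd_of_pow_eq_one hg_pow
          have hcop : Nat.Coprime q (p ^ k2) := by
            apply Nat.Coprime.pow_right
            rw [hq.coprime_iff_not_dvd]
            intro hdd
            exact hqp ((Nat.prime_dvd_prime_iff_eq hq hp).mp hdd)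
          have : orderOf g = 1 := Nat.dvd_one.mp (hcop ▸ Nat.dvd_gcd h1 h2)
          rw [Subgroup.mem_bot]
          exact orderOf_eq_one_iff.mp this
        -- cardinalities
        have hcardH : Nat.card H = Nat.card M * Nat.card Pbar := by
          rw [hHdef]
          have h8 := card_comap_surj π hπsurj (Pbar : Subgroup (G ⧸ M))
          rwa [hπdef, QuotientGroup.ker_mk'] at h8
        have hpM : ¬ p ∣ Nat.card M := by
          obtain ⟨kM, hkM⟩ := hMq.exists_card_eq
          rw [hkM]
          intro hdd
          exact hqp ((Nat.prime_dvd_prime_iff_eq hp hq).mp (hp.dvd_of_dvd_pow hdd)).symm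
        have hcardPbar : Nat.card Pbar = Nat.card P := by
          rw [P.card_eq_multiplicity, Pbar.card_eq_multiplicity]
          congr 1
          rw [hcardGM, Nat.factorization_mul Nat.card_pos.ne' Nat.card_pos.ne']
          simp [Nat.factorization_eq_zero_of_not_dvd hpM]
        have hcardJ : Nat.card (M ⊔ (P : Subgroup G) : Subgroup G) = Nat.card H := by
          rw [card_sup_disjoint M (P : Subgroup G) hdisjMP, hcardH, hcardPbar]
        have hJH : M ⊔ (P : Subgroup G) = H := by
          apply subgroup_eq_of_le_of_card_le (sup_le hMH (hallP P))
          rw [hcardJ]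
        -- H normalizes P
        have hHnormP : H ≤ normalizer ((P : Subgroup G) : Set G) := by
          intro h hh
          rw [← hJH] at hh
          have hh2 : h ∈ ((M : Set G) * ((P : Subgroup G) : Set G)) := by
            rw [← Subgroup.normal_mul]
            exact hh
          obtain ⟨m', hm', u, hu, rfl⟩ := hh2
          rw [Subgroup.mem_normalizer_iff]
          intro t
          constructor
          · intro ht
            have e : m' * u * t * (m' * u)⁻¹ = m' * (u * t * u⁻¹) * m'⁻¹ := by group
            rw [e]
            have hutP : u * t * u⁻¹ ∈ (P : Subgroup G) := mul_mem (mul_mem hu ht) (inv_mem hu)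
            have hcomm := hPM _ hutP _ hm'
            have e2 : m' * (u * t * u⁻¹) * m'⁻¹ = u * t * u⁻¹ := by
              rw [← hcomm.eq, mul_inv_cancel_right]
            rw [e2]
            exact hutP
          · intro ht
            have e : t = u⁻¹ * (m'⁻¹ * (m' * u * t * (m' * u)⁻¹) * m') * u := by group
            rw [e]
            have hzP : m' * u * t * (m' * u)⁻¹ ∈ (P : Subgroup G) := ht
            have hcomm := hPM _ hzP _ hm'
            have e2 : m'⁻¹ * (m' * u * t * (m' * u)⁻¹) * m' = m' * u * t * (m' * u)⁻¹ := by
              rw [mul_assoc, hcomm.eq, ← mul_assoc]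
              simp
            rw [e2]
            exact mul_mem (mul_mem (inv_mem hu) hzP) hu
        -- Frattini argument
        have hfrat := Sylow.normalizer_sup_eq_top' P (hallP P)
        rw [← Subgroup.normalizer_eq_top_iff]
        rw [sup_eq_left.mpr (le_trans hHnormP ?_)] at hfrat
        · exact hfrat
        · exact le_refl _

end Isob

open Subgroup Isob

/-- If `G` is `n`-isobicyclic, `p 0 > p 1 > ⋯ > p (l-1)` are the distinct
primes dividing `n` in decreasing order, and `P i` is a Sylow `p i`-subgroup for each `i`,
then each set product `N_i = P 0 · P 1 ⋯ P i` is a normal subgroup of `G`. -/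
theorem isobicyclic_sylowProd_normal
    {G : Type*} [Group G] [Finite G] (n : ℕ) (hn : 0 < n) (x y : G)
    (hx : orderOf x = n) (hy : orderOf y = n)
    (hprod : (↑(Subgroup.zpowers x) * ↑(Subgroup.zpowers y) : Set G) = Set.univ)
    (hinter : Subgroup.zpowers x ⊓ Subgroup.zpowers y = ⊥)
    (α : G ≃* G) (hαx : α x = y) (hαy : α y = x)
    (l : ℕ) (p : Fin l → ℕ)
    (hprime : ∀ i, (p i).Prime) (hdvd : ∀ i, p i ∣ n)
    (hall : ∀ q : ℕ, q.Prime → q ∣ n → ∃ i, q = p i)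
    (hdec : ∀ i j : Fin l, i < j → p j < p i)
    (P : (i : Fin l) → Sylow (p i) G) :
    ∀ i : Fin l, ∃ N : Subgroup G, N.Normal ∧
      (N : Set G) =
        (((List.finRange l).take (i + 1)).map fun j => ((P j : Subgroup G) : Set G)).prod := by
  classical
  have hcardG : Nat.card G = n * n := by
    have := card_eq_mul_of_mul_eq_univ hprod hinter
    rwa [Nat.card_zpowers, Nat.card_zpowers, hx, hy] at this
  have hprimeG : ∀ q : ℕ, q.Prime → q ∣ Nat.card G → ∃ i, q = p i := by
    intro q hq hd
    rw [hcardG] at hd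
    exact hall q hq ((hq.dvd_mul.mp hd).elim id id)
  -- the tower of normal subgroups
  have tower : ∀ j : ℕ, (hjl : j < l) → ∃ K : Subgroup G, K.Normal ∧
      (K.map α.toMonoidHom = K) ∧
      (∀ t : Fin l, (t : ℕ) ≤ j → (P t : Subgroup G) ≤ K) ∧
      (∀ q : ℕ, q.Prime → q ∣ Nat.card K → ∃ t : Fin l, (t : ℕ) ≤ j ∧ q = p t) ∧
      ((K : Set G) =
        (((List.finRange l).take (j + 1)).map fun t => ((P t : Subgroup G) : Set G)).prod) := by
    intro j
    induction j with
    | zero =>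
      intro h0
      set i0 : Fin l := ⟨0, h0⟩ with hi0
      haveI : Fact (p i0).Prime := ⟨hprime i0⟩
      have hnorm0 : ∀ R : Sylow (p i0) G, (R : Subgroup G).Normal := by
        apply sylow_normal_aux (Nat.card G) G x y α le_rfl hprod hαx hαy (p i0) (hprime i0)
        intro q hq hd
        obtain ⟨t, rfl⟩ := hprimeG q hq hd
        rcases eq_or_ne t i0 with rfl | hne
        · exact le_refl _
        · have hlt : i0 < t := by
            have hv : (i0 : ℕ) = 0 := rfl
            have hv2 : (t : ℕ) ≠ 0 := fun h => hne (Fin.ext h)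
            rw [Fin.lt_def, hv]
            omega
          exact le_of_lt (hdec i0 t hlt)
      have huniq0 : ∀ R : Sylow (p i0) G, R = P i0 := by
        intro R
        obtain ⟨g, hg⟩ := MulAction.exists_smul_eq G R (P i0)
        haveI : (R : Subgroup G).Normal := hnorm0 R
        rw [← hg, Sylow.smul_eq_of_normal]
      refine ⟨(P i0 : Subgroup G), hnorm0 (P i0), ?_, ?_, ?_, ?_⟩
      · have h1 : IsPGroup (p i0) ((P i0 : Subgroup G).map α.toMonoidHom) :=
          (P i0).2.map _
        obtain ⟨R, hR⟩ := h1.exists_le_sylow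
        rw [huniq0 R] at hR
        apply subgroup_eq_of_le_of_card_le hR
        have he : Nat.card ((P i0 : Subgroup G).map α.toMonoidHom)
            = Nat.card (P i0 : Subgroup G) :=
          Nat.card_congr (Subgroup.equivMapOfInjective _ _ α.injective).symm.toEquiv
        rw [he]
      · intro t ht
        have : t = i0 := Fin.ext (Nat.le_zero.mp ht)
        rw [this]
      · intro q hq hd
        rw [(P i0).card_eq_multiplicity] at hd
        refine ⟨i0, le_refl _, ?_⟩
        exact (Nat.prime_dvd_prime_iff_eq hq (hprime i0)).mp (hq.dvd_of_dvd_pow hd)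
      · have h0l : 0 < (List.finRange l).length := by
          rw [List.length_finRange]
          exact h0
        have hlist : ((List.finRange l).take 1) = [i0] := by
          rw [List.take_succ, List.take_zero, List.getElem?_eq_getElem h0l]
          simp [List.getElem_finRange, hi0]
        rw [hlist]
        simp
    | succ j IHj =>
      intro hj1
      have hjl : j < l := Nat.lt_of_succ_lt hj1
      obtain ⟨K, hKnorm, hKα, hKP, hKq, hKset⟩ := IHj hjl
      haveI := hKnorm
      set i1 : Fin l := ⟨j + 1, hj1⟩ with hi1
      haveI : Fact (p i1).Prime := ⟨hprime i1⟩
      set π : G →* G ⧸ K := QuotientGroup.mk' K with hπdef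
      have hπsurj : Function.Surjective π := QuotientGroup.mk'_surjective K
      set αbar : (G ⧸ K) ≃* (G ⧸ K) := QuotientGroup.congr K K α hKα with hαbardef
      have hαbar_mk : ∀ g : G, αbar (π g) = π (α g) := fun g => rfl
      have hprodbar :
          ((zpowers (π x) : Set (G ⧸ K)) * (zpowers (π y) : Set (G ⧸ K))) = Set.univ := by
        rw [Set.eq_univ_iff_forall]
        intro gb
        obtain ⟨g, rfl⟩ := hπsurj gb
        have hg : g ∈ ((zpowers x : Set G) * (zpowers y : Set G)) := by rw [hprod]; trivial
        obtain ⟨a, ha, b, hb, rfl⟩ := hg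
        rw [map_mul]
        refine Set.mul_mem_mul ?_ ?_
        · obtain ⟨i, hi⟩ := ha
          dsimp at hi
          refine ⟨i, ?_⟩
          dsimp
          rw [← hi, map_zpow]
        · obtain ⟨i, hi⟩ := hb
          dsimp at hi
          refine ⟨i, ?_⟩
          dsimp
          rw [← hi, map_zpow]
      have hcardGK : Nat.card G = Nat.card (G ⧸ K) * Nat.card K :=
        Subgroup.card_eq_card_quotient_mul_card_subgroup K
      -- p t does not divide card (G ⧸ K) for t ≤ j
      have hnotdvd : ∀ t : Fin l, (t : ℕ) ≤ j → ¬ (p t) ∣ Nat.card (G ⧸ K) := by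
        intro t ht hdd
        haveI : Fact (p t).Prime := ⟨hprime t⟩
        have hPt : (P t : Subgroup G) ≤ K := hKP t ht
        have hdvd1 : Nat.card (P t) ∣ Nat.card K := Subgroup.card_dvd_of_le hPt
        rw [(P t).card_eq_multiplicity] at hdvd1
        have hdvd2 : (p t) ^ ((Nat.card G).factorization (p t) + 1) ∣ Nat.card G := by
          have h9 := mul_dvd_mul hdvd1 hdd
          rw [← pow_succ] at h9
          exact h9.trans (dvd_of_eq (by rw [hcardGK]; exact mul_comm _ _))
        have := (Nat.Prime.pow_dvd_iff_le_factorization (hprime t)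
          Nat.card_pos.ne').mp hdvd2
        omega
      -- all Sylow (p i1) subgroups of the quotient are normal
      have hnormbar : ∀ R : Sylow (p i1) (G ⧸ K), (R : Subgroup (G ⧸ K)).Normal := by
        apply sylow_normal_aux (Nat.card (G ⧸ K)) (G ⧸ K) (π x) (π y) αbar le_rfl hprodbar
          (by rw [hαbar_mk, hαx]) (by rw [hαbar_mk, hαy]) (p i1) (hprime i1)
        intro q hq hd
        have hdG : q ∣ Nat.card G := hd.trans ⟨Nat.card K, hcardGK⟩
        obtain ⟨t, rfl⟩ := hprimeG q hq hdG
        by_cases htj : (t : ℕ) ≤ j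
        · exact absurd hd (hnotdvd t htj)
        · push_neg at htj
          rcases eq_or_ne t i1 with rfl | hne
          · exact le_refl _
          · have hlt : i1 < t := by
              have hv : (i1 : ℕ) = j + 1 := rfl
              have hv2 : (t : ℕ) ≠ j + 1 := fun h => hne (Fin.ext h)
              rw [Fin.lt_def, hv]
              omega
            exact le_of_lt (hdec i1 t hlt)
      set Sbar : Sylow (p i1) (G ⧸ K) := (P i1).mapSurjective hπsurj with hSbardef
      have hSbarcoe : (Sbar : Subgroup (G ⧸ K)) = (P i1 : Subgroup G).map π := rfl
      haveI hSbarnorm : (Sbar : Subgroup (G ⧸ K)).Normal := hnormbar Sbar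
      have hSyluniq : ∀ R : Sylow (p i1) (G ⧸ K), R = Sbar := by
        intro R
        obtain ⟨g, hg⟩ := MulAction.exists_smul_eq (G ⧸ K) R Sbar
        haveI : (R : Subgroup (G ⧸ K)).Normal := hnormbar R
        rw [← hg, Sylow.smul_eq_of_normal]
      set K' : Subgroup G := (Sbar : Subgroup (G ⧸ K)).comap π with hK'def
      haveI hK'norm : K'.Normal := hSbarnorm.comap π
      have hKK' : K ≤ K' := by
        intro g hg
        have hg1 : π g = 1 := by
          rw [hπdef]
          simpa [QuotientGroup.eq_one_iff] using hg
        rw [hK'def, Subgroup.mem_comap, hg1]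
        exact Subgroup.one_mem _
      have hPK' : (P i1 : Subgroup G) ≤ K' := by
        rw [hK'def, hSbarcoe]
        exact Subgroup.le_comap_map _ _
      -- alpha stability of K'
      have hαSbar : (Sbar : Subgroup (G ⧸ K)).map αbar.toMonoidHom = Sbar := by
        have h1 : IsPGroup (p i1) ((Sbar : Subgroup (G ⧸ K)).map αbar.toMonoidHom) :=
          Sbar.2.map _
        obtain ⟨R, hR⟩ := h1.exists_le_sylow
        rw [hSyluniq R] at hR
        apply subgroup_eq_of_le_of_card_le hR
        have he : Nat.card ((Sbar : Subgroup (G ⧸ K)).map αbar.toMonoidHom)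
            = Nat.card (Sbar : Subgroup (G ⧸ K)) :=
          Nat.card_congr (Subgroup.equivMapOfInjective _ _ αbar.injective).symm.toEquiv
        rw [he]
      have hK'α : K'.map α.toMonoidHom = K' := by
        have hle : K'.map α.toMonoidHom ≤ K' := by
          intro g hg
          rw [Subgroup.mem_map] at hg
          obtain ⟨g0, hg0, rfl⟩ := hg
          rw [hK'def, Subgroup.mem_comap]
          have e1 : π (α.toMonoidHom g0) = αbar (π g0) := (hαbar_mk g0).symm
          rw [e1]
          rw [← hαSbar]
          exact Subgroup.mem_map_of_mem _ hg0
        apply subgroup_eq_of_le_of_card_le hle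
        have he : Nat.card (K'.map α.toMonoidHom) = Nat.card K' :=
          Nat.card_congr (Subgroup.equivMapOfInjective _ _ α.injective).symm.toEquiv
        rw [he]
      -- cardinalities
      have hcardK' : Nat.card K' = Nat.card K * Nat.card Sbar := by
        rw [hK'def]
        have h8 := card_comap_surj π hπsurj (Sbar : Subgroup (G ⧸ K))
        rwa [hπdef, QuotientGroup.ker_mk'] at h8
      have hpK : ¬ (p i1) ∣ Nat.card K := by
        intro hdd
        obtain ⟨t, ht, hteq⟩ := hKq (p i1) (hprime i1) hdd
        have hv : (i1 : ℕ) = j + 1 := rfl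
        have hlt : t < i1 := by
          rw [Fin.lt_def, hv]
          omega
        exact absurd hteq.symm (ne_of_gt (hdec t i1 hlt))
      have hcardSbar : Nat.card Sbar = Nat.card (P i1) := by
        rw [(P i1).card_eq_multiplicity, Sbar.card_eq_multiplicity]
        congr 1
        rw [hcardGK, Nat.factorization_mul Nat.card_pos.ne' Nat.card_pos.ne']
        simp [Nat.factorization_eq_zero_of_not_dvd hpK]
      have hdisj : K ⊓ (P i1 : Subgroup G) = ⊥ := by
        rw [eq_bot_iff]
        intro g hg
        rw [Subgroup.mem_bot]
        by_contra hg1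
        have hgo : orderOf g ≠ 1 := fun h => hg1 (orderOf_eq_one_iff.mp h)
        obtain ⟨r, hr, hrd⟩ := Nat.exists_prime_and_dvd hgo
        have hrK : r ∣ Nat.card K :=
          hrd.trans (Subgroup.orderOf_dvd_natCard K hg.1)
        have hrP : r ∣ Nat.card (P i1) :=
          hrd.trans (Subgroup.orderOf_dvd_natCard _ hg.2)
        obtain ⟨t, ht, hteq⟩ := hKq r hr hrK
        rw [(P i1).card_eq_multiplicity] at hrP
        have hri1 : r = p i1 := (Nat.prime_dvd_prime_iff_eq hr (hprime i1)).mp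
          (hr.dvd_of_dvd_pow hrP)
        have hv : (i1 : ℕ) = j + 1 := rfl
        have hlt : t < i1 := by
          rw [Fin.lt_def, hv]
          omega
        have hcontra : p i1 < p t := hdec t i1 hlt
        rw [← hri1, ← hteq] at hcontra
        exact lt_irrefl r hcontra
      have hcardJ : Nat.card (K ⊔ (P i1 : Subgroup G) : Subgroup G) = Nat.card K' := by
        rw [card_sup_disjoint K (P i1 : Subgroup G) hdisj, hcardK', hcardSbar]
      have hJK' : K ⊔ (P i1 : Subgroup G) = K' := by
        apply subgroup_eq_of_le_of_card_le (sup_le hKK' hPK')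
        rw [hcardJ]
      have hK'set : (K' : Set G) = (K : Set G) * ((P i1 : Subgroup G) : Set G) := by
        rw [← hJK', Subgroup.normal_mul]
      -- list manipulation
      have hlen : j + 1 < (List.finRange l).length := by
        rw [List.length_finRange]
        exact hj1
      have hlist : (List.finRange l).take (j + 2)
          = (List.finRange l).take (j + 1) ++ [i1] := by
        rw [List.take_succ, List.getElem?_eq_getElem hlen]
        simp [List.getElem_finRange, hi1]
      refine ⟨K', hK'norm, hK'α, ?_, ?_, ?_⟩
      · intro t ht
        rcases Nat.lt_or_ge (t : ℕ) (j + 1) with h1 | h1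
        · exact le_trans (hKP t (by omega)) hKK'
        · have hv : (i1 : ℕ) = j + 1 := rfl
          have : t = i1 := Fin.ext (by rw [hv]; omega)
          rw [this]
          exact hPK'
      · intro q hq hd
        rw [hcardK'] at hd
        rcases (Nat.Prime.dvd_mul hq).mp hd with h1 | h1
        · obtain ⟨t, ht, hteq⟩ := hKq q hq h1
          exact ⟨t, by omega, hteq⟩
        · rw [Sbar.card_eq_multiplicity] at h1
          refine ⟨i1, by have hv : (i1 : ℕ) = j + 1 := rfl; omega, ?_⟩
          exact (Nat.prime_dvd_prime_iff_eq hq (hprime i1)).mp (hq.dvd_of_dvd_pow h1)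
      · rw [hlist, List.map_append, List.prod_append, ← hKset, hK'set]
        simp
  intro i
  obtain ⟨K, hKnorm, _, _, _, hKset⟩ := tower (i : ℕ) i.isLt
  exact ⟨K, hKnorm, hKset⟩
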